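/- Let L be a complete lattice, Q a partially ordered set equipped with a superlinear family of translations T, and δ ≥ 0. If f : L → Q is a δ-approximation that respects joins and C is a cocomplete category, then for every Q-module M : Q → C the weak interleaving distance between M and its lower pixelization satisfies d_Q(M, f_*f^*M) ≤ δ (equivalently, d_Q(M, M ∘ f ∘ f♭) ≤ δ). Dually, if f : L → Q is a δ-approximation that respects meets and C is complete, then d_Q(M, f_†f^*M) ≤ δ (equivalently, d_Q(M, M ∘ f ∘ f♯) ≤ δ) for every Q-module M. -/

import Mathlib

open CategoryTheory Limits NNReal ENNReal

universe v u

/-- A superlinear family of translations on a poset `Q`. -/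
structure SuperlinearFamily (Q : Type v) [PartialOrder Q] where
  trans : ℝ≥0 → Q →o Q
  le_self : ∀ (ε : ℝ≥0) (q : Q), q ≤ trans ε q
  superlinear : ∀ (ε₁ ε₂ : ℝ≥0) (q : Q), trans ε₂ (trans ε₁ q) ≤ trans (ε₁ + ε₂) q

namespace SuperlinearFamily

variable {Q : Type v} [PartialOrder Q] (T : SuperlinearFamily Q)

lemma trans_mono_eps {ε ε' : ℝ≥0} (h : ε ≤ ε') (q : Q) : T.trans ε q ≤ T.trans ε' q :=
  calc T.trans ε q ≤ T.trans (ε' - ε) (T.trans ε q) := T.le_self _ _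
    _ ≤ T.trans (ε + (ε' - ε)) q := T.superlinear _ _ _
    _ = T.trans ε' q := by rw [add_tsub_cancel_of_le h]

variable {C : Type u} [Category.{v} C]

/-- The `ε`-shift `(M)^ε = M ∘ T_ε` of a `Q`-module. -/
def shift (ε : ℝ≥0) (M : Q ⥤ C) : Q ⥤ C := (T.trans ε).monotone.functor ⋙ M

/-- η^ε : M ⟶ (M)^ε. -/
def eta (ε : ℝ≥0) (M : Q ⥤ C) : M ⟶ T.shift ε M where
  app q := M.map (homOfLE (T.le_self ε q))
  naturality a b u := by
    dsimp [shift, Monotone.functor]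
    rw [← M.map_comp, ← M.map_comp]
    exact congrArg M.map (Subsingleton.elim _ _)

/-- η^{ε,ε'} : (M)^ε ⟶ (M)^{ε'} for ε ≤ ε'. -/
def etaLE {ε ε' : ℝ≥0} (h : ε ≤ ε') (M : Q ⥤ C) : T.shift ε M ⟶ T.shift ε' M where
  app q := M.map (homOfLE (T.trans_mono_eps h q))
  naturality a b u := by
    dsimp [shift, Monotone.functor]
    rw [← M.map_comp, ← M.map_comp]
    exact congrArg M.map (Subsingleton.elim _ _)

/-- Σ^{ε,ε} : ((M)^ε)^ε ⟶ (M)^{2ε}. -/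
def sigma (ε : ℝ≥0) (M : Q ⥤ C) : T.shift ε (T.shift ε M) ⟶ T.shift (2 * ε) M where
  app q := M.map (homOfLE (show T.trans ε (T.trans ε q) ≤ T.trans (2 * ε) q by
    rw [two_mul]; exact T.superlinear ε ε q))
  naturality a b u := by
    dsimp [shift, Monotone.functor]
    rw [← M.map_comp, ← M.map_comp]
    exact congrArg M.map (Subsingleton.elim _ _)

/-- The shift of a natural transformation: (ψ)^ε := T_ε^* ψ. -/
def shiftHom (ε : ℝ≥0) {M N : Q ⥤ C} (ψ : M ⟶ N) : T.shift ε M ⟶ T.shift ε N :=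
  Functor.whiskerLeft (T.trans ε).monotone.functor ψ

/-- A weak ε-interleaving of `Q`-modules `M` and `N`. -/
def WeakInterleaving (ε : ℝ≥0) (M N : Q ⥤ C) : Prop :=
  ∃ (φ : M ⟶ T.shift ε N) (ψ : N ⟶ T.shift ε M),
    φ ≫ T.shiftHom ε ψ ≫ T.sigma ε M = T.eta 0 M ≫ T.etaLE zero_le M ∧
    ψ ≫ T.shiftHom ε φ ≫ T.sigma ε N = T.eta 0 N ≫ T.etaLE zero_le N

/-- The weak interleaving distance between two `Q`-modules, valued in `[0,∞]`. -/
noncomputable def weakDist (M N : Q ⥤ C) : ℝ≥0∞ :=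
  ⨅ ε : {ε : ℝ≥0 // T.WeakInterleaving ε M N}, (ε : ℝ≥0∞)

end SuperlinearFamily

/-- The map `f♭ : Q → L`, `f♭(q) = sSup {x | f x ≤ q}`, as a monotone map. -/
def flatHom {L : Type v} [CompleteLattice L] {Q : Type v} [PartialOrder Q] (f : L →o Q) :
    Q →o L :=
  ⟨fun q => sSup {x : L | f x ≤ q}, fun _ _ h => sSup_le_sSup fun _ hx => le_trans hx h⟩

/-- The map `f♯ : Q → L`, `f♯(q) = sInf {x | q ≤ f x}`, as a monotone map. -/
def sharpHom {L : Type v} [CompleteLattice L] {Q : Type v} [PartialOrder Q] (f : L →o Q) :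
    Q →o L :=
  ⟨fun q => sInf {x : L | q ≤ f x}, fun _ _ h => sInf_le_sInf fun _ hx => le_trans h hx⟩

namespace SuperlinearFamily

variable {Q : Type v} [PartialOrder Q] (T : SuperlinearFamily Q)
variable {C : Type u} [Category.{v} C]

lemma weakDist_le {ε : ℝ≥0} {M N : Q ⥤ C} (h : T.WeakInterleaving ε M N) :
    T.weakDist M N ≤ (ε : ℝ≥0∞) :=
  iInf_le _ (⟨ε, h⟩ : {ε : ℝ≥0 // T.WeakInterleaving ε M N})

/-- Transport a weak interleaving along an isomorphism in the second argument. -/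
lemma weakInterleaving_of_iso {ε : ℝ≥0} {M N N' : Q ⥤ C} (e : N ≅ N')
    (h : T.WeakInterleaving ε M N) : T.WeakInterleaving ε M N' := by
  obtain ⟨φ, ψ, h1, h2⟩ := h
  refine ⟨φ ≫ T.shiftHom ε e.hom, e.inv ≫ ψ, ?_, ?_⟩
  · have : T.shiftHom ε e.hom ≫ T.shiftHom ε (e.inv ≫ ψ) = T.shiftHom ε ψ := by
      simp only [shiftHom]; erw [← Functor.whiskerLeft_comp, Iso.hom_inv_id_assoc]
    rw [Category.assoc, ← Category.assoc (T.shiftHom ε e.hom), this, h1]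
  · ext q
    have h2q := congrArg (fun (α : N ⟶ T.shift (2 * ε) N) => α.app q) h2
    rw [show T.shiftHom ε (φ ≫ T.shiftHom ε e.hom) = T.shiftHom ε φ ≫ T.shiftHom ε (T.shiftHom ε e.hom) from rfl]
    simp only [NatTrans.comp_app] at h2q ⊢
    simp only [NatTrans.comp_app, shiftHom, Functor.whiskerLeft_app, Functor.whiskerLeft_comp,
      sigma, eta, etaLE, shift, Monotone.functor, Functor.comp_obj,
      Functor.comp_map, Category.assoc] at h2q ⊢
    rw [← e.hom.naturality (homOfLE (show T.trans ε (T.trans ε q) ≤ T.trans (2 * ε) q by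
      rw [two_mul]; exact T.superlinear ε ε q))]
    rw [reassoc_of% h2q]
    rw [e.hom.naturality (homOfLE (T.trans_mono_eps (zero_le (a := 2 * ε)) q))]
    rw [e.hom.naturality_assoc (homOfLE (T.le_self 0 q))]
    simp

/-- The basic interleaving of `M` with `M ∘ r` for `r` pointwise between `id` and `T_δ`. -/
lemma weakInterleaving_comp (δ : ℝ≥0) (r : Q →o Q)
    (h1 : ∀ q, q ≤ r (T.trans δ q)) (h2 : ∀ q, r q ≤ T.trans δ q) (M : Q ⥤ C) :
    T.WeakInterleaving δ M (r.monotone.functor ⋙ M) := by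
  refine ⟨⟨fun q => M.map (homOfLE (h1 q)), ?_⟩,
          ⟨fun q => M.map (homOfLE ((h2 q))), ?_⟩, ?_, ?_⟩
  · intro a b u
    dsimp [shift, Monotone.functor]
    rw [← M.map_comp, ← M.map_comp]
    exact congrArg M.map (Subsingleton.elim _ _)
  · intro a b u
    dsimp [shift, Monotone.functor]
    rw [← M.map_comp, ← M.map_comp]
    exact congrArg M.map (Subsingleton.elim _ _)
  · ext q
    simp only [NatTrans.comp_app, shiftHom, Functor.whiskerLeft_app, sigma, eta, etaLE,
      shift, Monotone.functor, Functor.comp_map]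
    simp only [← Functor.map_comp]
    exact congrArg M.map (Subsingleton.elim _ _)
  · ext q
    simp only [NatTrans.comp_app, shiftHom, Functor.whiskerLeft_app, sigma, eta, etaLE,
      shift, Monotone.functor, Functor.comp_map, Functor.comp_obj]
    simp only [← Functor.map_comp]
    exact congrArg M.map (Subsingleton.elim _ _)

end SuperlinearFamily

/-- If `f` respects joins then `f ⊣ f♭` is a Galois connection. -/
lemma gc_flat {L : Type v} [CompleteLattice L] {Q : Type v} [PartialOrder Q] (f : L →o Q)
    (hJ : ∀ (S : Set L) (q : Q), (∀ x ∈ S, f x ≤ q) → f (sSup S) ≤ q) :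
    GaloisConnection ⇑f ⇑(flatHom f) := fun x q =>
  ⟨fun h => le_sSup h, fun h => le_trans (f.monotone h) (hJ _ q fun _ hx => hx)⟩

/-- If `f` respects meets then `f♯ ⊣ f` is a Galois connection. -/
lemma gc_sharp {L : Type v} [CompleteLattice L] {Q : Type v} [PartialOrder Q] (f : L →o Q)
    (hM : ∀ (S : Set L) (q : Q), (∀ x ∈ S, q ≤ f x) → q ≤ f (sInf S)) :
    GaloisConnection ⇑(sharpHom f) ⇑f := fun q x =>
  ⟨fun h => le_trans (hM _ q fun _ hx => hx) (f.monotone h), fun h => sInf_le h⟩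

/-- If `f` respects joins then `f ∘ f♭` is within `id` and `T_δ` pointwise composition iso. -/
noncomputable def compIsoComp {L Q : Type v} [Preorder L] [Preorder Q]
    {C : Type u} [Category.{v} C] (g : Q →o L) (f : L →o Q) (r : Q →o Q)
    (hr : ∀ q, r q = f (g q)) (M : Q ⥤ C) :
    (g.monotone.functor ⋙ (f.monotone.functor ⋙ M)) ≅ (r.monotone.functor ⋙ M) :=
  NatIso.ofComponents (fun q => M.mapIso (eqToIso ((hr q).symm))) (by
    intro a b u
    simp only [Functor.comp_map, Monotone.functor, Functor.mapIso_hom, eqToIso.hom]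
    rw [← M.map_comp, ← M.map_comp]
    exact congrArg M.map (Subsingleton.elim _ _))

/-- If `f : L → Q` is a δ-approximation from a complete lattice which respects joins, then
every `Q`-module is within weak interleaving distance δ of its lower pixelization
`f_*f^*M ≅ M ∘ f ∘ f♭`; dually, if `f` respects meets, every `Q`-module is within
distance δ of its upper pixelization `f_†f^*M ≅ M ∘ f ∘ f♯`. -/
theorem dist_to_pixelization_le_delta {L : Type v} [CompleteLattice L]
    {Q : Type v} [PartialOrder Q] (T : SuperlinearFamily Q) (δ : ℝ≥0) (f : L →o Q)
    (happrox : ∀ q : Q, ∃ p : L, q ≤ f p ∧ f p ≤ T.trans δ q) :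
    ((∀ (S : Set L) (q : Q), (∀ x ∈ S, f x ≤ q) → f (sSup S) ≤ q) →
      ∀ (C : Type u) [Category.{v} C] [HasColimits C] (M : Q ⥤ C),
        T.weakDist M (f.monotone.functor.lan.obj (f.monotone.functor ⋙ M)) ≤ (δ : ℝ≥0∞) ∧
        T.weakDist M ((f.comp (flatHom f)).monotone.functor ⋙ M) ≤ (δ : ℝ≥0∞)) ∧
    ((∀ (S : Set L) (q : Q), (∀ x ∈ S, q ≤ f x) → q ≤ f (sInf S)) →
      ∀ (C : Type u) [Category.{v} C] [HasLimits C] (M : Q ⥤ C),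
        T.weakDist M (f.monotone.functor.ran.obj (f.monotone.functor ⋙ M)) ≤ (δ : ℝ≥0∞) ∧
        T.weakDist M ((f.comp (sharpHom f)).monotone.functor ⋙ M) ≤ (δ : ℝ≥0∞)) := by
  constructor
  · intro hJ C _ _ M
    have hgc := gc_flat f hJ
    set r : Q →o Q := f.comp (flatHom f) with hrdef
    have hr1 : ∀ q, q ≤ r (T.trans δ q) := by
      intro q
      obtain ⟨p, hp1, hp2⟩ := happrox q
      exact hp1.trans (f.monotone (le_sSup hp2))
    have hr2 : ∀ q, r q ≤ T.trans δ q := fun q =>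
      le_trans (hJ _ q fun _ hx => hx) (T.le_self δ q)
    have base := T.weakInterleaving_comp δ r hr1 hr2 M
    have adjF : f.monotone.functor ⊣ (flatHom f).monotone.functor := hgc.adjunction
    have e1 : f.monotone.functor.lan ≅
        (Functor.whiskeringLeft Q L C).obj (flatHom f).monotone.functor :=
      Adjunction.leftAdjointUniq (f.monotone.functor.lanAdjunction C) (adjF.whiskerLeft C)
    have e2 : (r.monotone.functor ⋙ M) ≅
        f.monotone.functor.lan.obj (f.monotone.functor ⋙ M) :=
      (compIsoComp (flatHom f) f r (fun q => rfl) M).symm ≪≫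
        (e1.symm.app (f.monotone.functor ⋙ M))
    exact ⟨T.weakDist_le (T.weakInterleaving_of_iso e2 base), T.weakDist_le base⟩
  · intro hM C _ _ M
    have hgc := gc_sharp f hM
    set r : Q →o Q := f.comp (sharpHom f) with hrdef
    have hr1 : ∀ q, q ≤ r (T.trans δ q) := fun q =>
      le_trans (T.le_self δ q) (hM _ _ fun _ hx => hx)
    have hr2 : ∀ q, r q ≤ T.trans δ q := by
      intro q
      obtain ⟨p, hp1, hp2⟩ := happrox q
      exact le_trans (f.monotone (sInf_le hp1)) hp2
    have base := T.weakInterleaving_comp δ r hr1 hr2 M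
    have adjF : (sharpHom f).monotone.functor ⊣ f.monotone.functor := hgc.adjunction
    have e1 : (Functor.whiskeringLeft Q L C).obj (sharpHom f).monotone.functor ≅
        f.monotone.functor.ran :=
      Adjunction.rightAdjointUniq (adjF.whiskerLeft C) (f.monotone.functor.ranAdjunction C)
    have e2 : (r.monotone.functor ⋙ M) ≅
        f.monotone.functor.ran.obj (f.monotone.functor ⋙ M) :=
      (compIsoComp (sharpHom f) f r (fun q => rfl) M).symm ≪≫
        (e1.app (f.monotone.functor ⋙ M))
    exact ⟨T.weakDist_le (T.weakInterleaving_of_iso e2 base), T.weakDist_le base⟩
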